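/- Let (V,g) be an n-dimensional (n ≥ 3) real vector space with a nondegenerate symmetric bilinear form g, and let B be a generalized curvature tensor with B = (φ/2)·Ric(B)∧Ric(B) + μ·g∧Ric(B) + (η/2)·g∧g, φ ≠ 0. Then (Ric(B))² = α₁·Ric(B) + α₂·g with α₁ = κ(B) + φ⁻¹((n−2)μ − 1) and α₂ = φ⁻¹(μ·κ(B) + (n−1)η), where κ(B) = tr_g(Ric(B)) and (Ric(B))² is the g-square of Ric(B). -/

import Mathlib

variable {V : Type*} [AddCommGroup V] [Module ℝ V]

/-- Kulkarni–Nomizu product of two (0,2)-tensors. -/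
def kn (A B : V → V → ℝ) : V → V → V → V → ℝ := fun x1 x2 x3 x4 =>
  A x1 x4 * B x2 x3 + A x2 x3 * B x1 x4 - A x1 x3 * B x2 x4 - A x2 x4 * B x1 x3

/-- The endomorphism `(X ∧_A Y)Z = A(Y,Z)X − A(X,Z)Y`. -/
def wedgeV (A : V → V → ℝ) (x y z : V) : V := A y z • x - A x z • y

/-- Tachibana tensor `Q(A,T)` of a (0,2)-tensor `A` and a (0,4)-tensor `T`. -/
def Q4 (A : V → V → ℝ) (T : V → V → V → V → ℝ) : V → V → V → V → V → V → ℝ :=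
  fun x1 x2 x3 x4 x y =>
    -(T (wedgeV A x y x1) x2 x3 x4) - T x1 (wedgeV A x y x2) x3 x4
      - T x1 x2 (wedgeV A x y x3) x4 - T x1 x2 x3 (wedgeV A x y x4)

/-- A generalized curvature tensor: skew in the first and last pairs, symmetric under
pair interchange, and satisfying the first Bianchi identity. -/
def IsGenCurv (R : V → V → V → V → ℝ) : Prop :=
  (∀ x₁ x₂ x₃ x₄, R x₂ x₁ x₃ x₄ = - R x₁ x₂ x₃ x₄) ∧
  (∀ x₁ x₂ x₃ x₄, R x₁ x₂ x₄ x₃ = - R x₁ x₂ x₃ x₄) ∧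
  (∀ x₁ x₂ x₃ x₄, R x₁ x₂ x₃ x₄ = R x₃ x₄ x₁ x₂) ∧
  (∀ x₁ x₂ x₃ x₄, R x₁ x₂ x₃ x₄ + R x₂ x₃ x₁ x₄ + R x₃ x₁ x₂ x₄ = 0)

/-- for a Roter-type generalized curvature tensor
`B = (φ/2)·Ric(B)∧Ric(B) + μ·g∧Ric(B) + (η/2)·g∧g` with `φ ≠ 0`, one has
`(Ric B)² = α₁·Ric(B) + α₂·g` with `α₁ = κ(B) + φ⁻¹((n−2)μ − 1)` and
`α₂ = φ⁻¹(μ·κ(B) + (n−1)η)`. -/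
theorem stmt_18 {V : Type*} [AddCommGroup V] [Module ℝ V] [FiniteDimensional ℝ V]
    (n : ℕ) (hn3 : 3 ≤ n) (hdim : Module.finrank ℝ V = n)
    (g : V →ₗ[ℝ] V →ₗ[ℝ] ℝ)
    (hg : ∀ x y, g x y = g y x)
    (hgnd : ∀ x : V, (∀ y : V, g x y = 0) → x = 0)
    (e : Module.Basis (Fin n) ℝ V) (ε : Fin n → ℝ) (hε : ∀ i, ε i = 1 ∨ ε i = -1)
    (horth : ∀ i j, g (e i) (e j) = if i = j then ε i else 0)
    (B : V → V → V → V → ℝ) (hBcurv : IsGenCurv B)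
    (S : V → V → ℝ) (hS : ∀ x y, S x y = ∑ i, ε i * B (e i) x y (e i))
    (s : V →ₗ[ℝ] V) (hs : ∀ x y, g (s x) y = S x y)
    (φ μ η : ℝ) (hφ : φ ≠ 0)
    (hB : ∀ x₁ x₂ x₃ x₄ : V,
      B x₁ x₂ x₃ x₄
        = (φ / 2) * kn S S x₁ x₂ x₃ x₄
          + μ * kn (fun u v => g u v) S x₁ x₂ x₃ x₄
          + (η / 2) * kn (fun u v => g u v) (fun u v => g u v) x₁ x₂ x₃ x₄) :
    ∀ x y : V,
      S (s x) y
        = (LinearMap.trace ℝ V s + φ⁻¹ * (((n : ℝ) - 2) * μ - 1)) * S x y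
          + (φ⁻¹ * (μ * LinearMap.trace ℝ V s + ((n : ℝ) - 1) * η)) * g x y := by
  intro x y
  set tr := LinearMap.trace ℝ V s with htr
  have hε2 : ∀ i, ε i * ε i = 1 := by
    intro i; rcases hε i with h | h <;> rw [h] <;> norm_num
  -- coordinates
  have hcoord : ∀ (u : V) (i : Fin n), g u (e i) = ε i * e.repr u i := by
    intro u i
    conv_lhs => rw [← e.sum_repr u]
    rw [map_sum]
    simp only [LinearMap.sum_apply, map_smul, LinearMap.smul_apply, horth, smul_eq_mul]
    rw [Finset.sum_eq_single i]
    · simp [mul_comm]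
    · intro j _ hj; simp [hj]
    · simp
  -- master contraction lemma
  have master : ∀ (f : V →ₗ[ℝ] ℝ) (u : V),
      ∑ i, ε i * (g u (e i) * f (e i)) = f u := by
    intro f u
    have : ∀ i : Fin n, ε i * (g u (e i) * f (e i)) = e.repr u i * f (e i) := by
      intro i
      rw [hcoord]
      linear_combination (e.repr u i * f (e i)) * hε2 i
    rw [Finset.sum_congr rfl fun i _ => this i]
    conv_rhs => rw [← e.sum_repr u]
    rw [map_sum]
    simp [smul_eq_mul]
  have hSg : ∀ u w, S u w = g (s u) w := fun u w => (hs u w).symm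
  -- the sums we need
  have F1 : ∑ i, ε i * S (e i) (e i) = tr := by
    have h := LinearMap.trace_eq_matrix_trace ℝ e s
    rw [htr, h, Matrix.trace]
    refine Finset.sum_congr rfl fun i _ => ?_
    rw [Matrix.diag_apply, LinearMap.toMatrix_apply, hSg, hcoord]
    linear_combination (e.repr (s (e i)) i) * hε2 i
  have F3 : ∑ i, ε i * g (e i) (e i) = (n : ℝ) := by
    simp only [horth, if_pos rfl]
    simp [hε2]
  have F2 : ∑ i, ε i * (S (e i) y * S x (e i)) = S (s x) y := by
    have : ∀ i : Fin n, ε i * (S (e i) y * S x (e i))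
        = ε i * (g (s x) (e i) * ((g.flip y).comp s) (e i)) := by
      intro i
      simp only [LinearMap.comp_apply, LinearMap.flip_apply]
      rw [hSg (e i) y, hSg x (e i)]
      ring
    rw [Finset.sum_congr rfl fun i _ => this i, master]
    simp only [LinearMap.comp_apply, LinearMap.flip_apply]
    rw [← hSg]
  have F4 : ∑ i, ε i * (g (e i) y * S x (e i)) = S x y := by
    have : ∀ i : Fin n, ε i * (g (e i) y * S x (e i))
        = ε i * (g (s x) (e i) * (g.flip y) (e i)) := by
      intro i
      simp only [LinearMap.flip_apply]
      rw [hSg x (e i)]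
      ring
    rw [Finset.sum_congr rfl fun i _ => this i, master]
    simp only [LinearMap.flip_apply]
    rw [← hSg]
  have F5 : ∑ i, ε i * (g x (e i) * S (e i) y) = S x y := by
    have : ∀ i : Fin n, ε i * (g x (e i) * S (e i) y)
        = ε i * (g x (e i) * ((g.flip y).comp s) (e i)) := by
      intro i
      simp only [LinearMap.comp_apply, LinearMap.flip_apply]
      rw [hSg (e i) y]
    rw [Finset.sum_congr rfl fun i _ => this i, master]
    simp only [LinearMap.comp_apply, LinearMap.flip_apply]
    rw [← hSg]
  have F6 : ∑ i, ε i * (g (e i) y * g x (e i)) = g x y := by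
    have : ∀ i : Fin n, ε i * (g (e i) y * g x (e i))
        = ε i * (g x (e i) * (g.flip y) (e i)) := by
      intro i
      simp only [LinearMap.flip_apply]
      ring
    rw [Finset.sum_congr rfl fun i _ => this i, master]
    simp [LinearMap.flip_apply]
  -- expand B and contract
  have key : S x y
      = (φ * S x y + μ * g x y) * tr + (μ * S x y + η * g x y) * (n : ℝ)
        - φ * S (s x) y - μ * S x y - μ * S x y - η * g x y := by
    have expand : ∀ i : Fin n, ε i * B (e i) x y (e i)
        = (φ * S x y + μ * g x y) * (ε i * S (e i) (e i))
          + (μ * S x y + η * g x y) * (ε i * g (e i) (e i))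
          - φ * (ε i * (S (e i) y * S x (e i)))
          - μ * (ε i * (g (e i) y * S x (e i)))
          - μ * (ε i * (g x (e i) * S (e i) y))
          - η * (ε i * (g (e i) y * g x (e i))) := by
      intro i
      rw [hB]
      simp only [kn]
      ring
    calc S x y = ∑ i, ε i * B (e i) x y (e i) := hS x y
      _ = ∑ i, ((φ * S x y + μ * g x y) * (ε i * S (e i) (e i))
          + (μ * S x y + η * g x y) * (ε i * g (e i) (e i))
          - φ * (ε i * (S (e i) y * S x (e i)))
          - μ * (ε i * (g (e i) y * S x (e i)))
          - μ * (ε i * (g x (e i) * S (e i) y))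
          - η * (ε i * (g (e i) y * g x (e i)))) :=
        Finset.sum_congr rfl fun i _ => expand i
      _ = (φ * S x y + μ * g x y) * tr + (μ * S x y + η * g x y) * (n : ℝ)
          - φ * S (s x) y - μ * S x y - μ * S x y - η * g x y := by
        simp only [Finset.sum_sub_distrib, Finset.sum_add_distrib, ← Finset.mul_sum]
        rw [F1, F2, F3, F4, F5, F6]
  field_simp
  linear_combination key
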